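/- Suppose two models are trained by the greedy training process on the cumulative datasets T_{1:j₁} and T_{1:j₂} respectively, with j₁ > j₂, both starting from the same learned set L and with no memorized data. If u_{c,i} denotes the i-th feature of class c learned by the model trained on T_{1:j₁} and u'_{c,i} that of the model trained on T_{1:j₂} (with value NA when learning in class c has stopped), then for every class c and index i, either u_{c,i} = u'_{c,i} or u'_{c,i} = NA; i.e., the model with the smaller dataset learns a per-class prefix of the features learned by the model with the larger dataset. -/

import Mathlib

open Finset

/-- Number of data points in `N` whose feature set contains the feature `v`. -/
def featCount {F X : Type} [DecidableEq F] (feats : X → Finset F)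
    (N : Finset X) (v : F) : ℕ :=
  (N.filter fun x => v ∈ feats x).card

/-- `g(v; T, N)`: the frequency of feature `v` among the data points of `N`,
normalized by the size of the full training set `T`. -/
noncomputable def gval {F X : Type} [DecidableEq F] (feats : X → Finset F)
    (T N : Finset X) (v : F) : ℝ :=
  (featCount feats N v : ℝ) / (T.card : ℝ)

/-- The set of data points of `T` with nonzero gradient: not memorized (not in
`M`) and not well-classified by the learned set `L` (fewer than `τ` of their
features are learned). -/
def active {F X : Type} [DecidableEq F] [DecidableEq X] (feats : X → Finset F) (τ : ℕ)
    (L : Finset F) (M T : Finset X) : Finset X :=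
  (T \ M).filter fun x => ((feats x) ∩ L).card < τ

/-- The learned set after the first `i` steps of a run `us` starting from `L0`. -/
def learnedAfter {F : Type} [DecidableEq F] (L0 : Finset F) (us : List F)
    (i : ℕ) : Finset F :=
  L0 ∪ (us.take i).toFinset

/-- `us` is a valid greedy training run on the dataset `T` with initially
memorized set `M`, starting from the learned set `L0`; `S` is the set of all
features, `τ` the well-classification threshold and `γ` the noise strength.
At every step the model picks a not-yet-learned feature of maximal frequency
`g` among the active (nonzero-gradient) data points; it is learned if its
frequency is at least `γ/|T|`, and at the end of the run every remaining
unlearned feature has frequency below `γ/|T|` (the remaining active points are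
then memorized). -/
structure IsRun {F X : Type} [DecidableEq F] [DecidableEq X] (S : Finset F)
    (feats : X → Finset F) (τ : ℕ) (γ : ℝ) (T M : Finset X)
    (L0 : Finset F) (us : List F) : Prop where
  mem : ∀ i (h : i < us.length), us.get ⟨i, h⟩ ∈ S \ learnedAfter L0 us i
  maximal : ∀ i (h : i < us.length), ∀ u ∈ S \ learnedAfter L0 us i,
    gval feats T (active feats τ (learnedAfter L0 us i) M T) u ≤
      gval feats T (active feats τ (learnedAfter L0 us i) M T) (us.get ⟨i, h⟩)
  threshold : ∀ i (h : i < us.length),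
    γ / (T.card : ℝ) ≤
      gval feats T (active feats τ (learnedAfter L0 us i) M T) (us.get ⟨i, h⟩)
  stopped : ∀ u ∈ S \ learnedAfter L0 us us.length,
    gval feats T (active feats τ (learnedAfter L0 us us.length) M T) u <
      γ / (T.card : ℝ)

/-- The memorized set after a run: the previously memorized points together
with all points that are still active (not well-classified) at the end of the
run. -/
def finalM {F X : Type} [DecidableEq F] [DecidableEq X] (feats : X → Finset F) (τ : ℕ)
    (T M : Finset X) (L0 : Finset F) (us : List F) : Finset X :=
  M ∪ active feats τ (L0 ∪ us.toFinset) M T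

/-- The cumulative dataset `T_{1:j}`, the union of the first `j` chunks. -/
def cumT {X : Type} [DecidableEq X] (chunk : ℕ → Finset X) (j : ℕ) : Finset X :=
  (Finset.Icc 1 j).biUnion chunk

/-- `h(v; L)`: the fraction of data points (of one chunk) containing `v` that
are not well-classified by the learned set `L`. -/
noncomputable def hval {F : Type} [DecidableEq F] (C : ℕ) (Sc : Fin C → Finset F)
    (nA : Fin C → Finset F → ℕ) (τ n : ℕ) (v : F) (L : Finset F) : ℝ :=
  (1 / (n : ℝ)) * ∑ c : Fin C, ∑ A ∈ (Sc c).powerset,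
    (nA c A : ℝ) * (if v ∈ A ∧ (A ∩ L).card < τ then 1 else 0)

/-- The test accuracy of a learned feature set `L`. -/
noncomputable def ACC {F : Type} [DecidableEq F] (C : ℕ) (Sc : Fin C → Finset F)
    (nA : Fin C → Finset F → ℕ) (τ n : ℕ) (L : Finset F) : ℝ :=
  1 - ((C : ℝ) - 1) / (C : ℝ) * ((1 / (n : ℝ)) *
    ∑ c : Fin C, ∑ A ∈ (Sc c).powerset,
      (nA c A : ℝ) * (if (A ∩ L).card < τ then 1 else 0))


section AuxForProof

theorem aux_filter_index {α} (p : α → Bool) (l : List α) (m : ℕ)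
    (hm : m < (l.filter p).length) :
    ∃ i, ∃ hi : i < l.length, l.get ⟨i, hi⟩ = (l.filter p).get ⟨m, hm⟩ ∧
      (l.take i).filter p = (l.filter p).take m := by
  induction l generalizing m with
  | nil => simp at hm
  | cons a t ih =>
    by_cases hp : p a
    · cases m with
      | zero => exact ⟨0, by simp, by simp [hp], by simp⟩
      | succ m =>
        have hm' : m < (t.filter p).length := by
          simpa [List.filter_cons, hp] using hm
        obtain ⟨i, hi, h1, h2⟩ := ih m hm'
        refine ⟨i+1, by simpa using Nat.succ_lt_succ hi, ?_, ?_⟩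
        · simpa [List.filter_cons, hp] using h1
        · simp [List.filter_cons, hp, h2]
    · have hm' : m < (t.filter p).length := by
        simpa [List.filter_cons, hp] using hm
      obtain ⟨i, hi, h1, h2⟩ := ih m hm'
      refine ⟨i+1, by simpa using Nat.succ_lt_succ hi, ?_, ?_⟩
      · simpa [List.filter_cons, hp] using h1
      · simp [List.filter_cons, hp, h2]

theorem aux_toFinset_inter {F : Type} [DecidableEq F] (L0 : Finset F) (l : List F)
    (s : Finset F) :
    (L0 ∪ l.toFinset) ∩ s = (L0 ∩ s) ∪ (l.filter fun v => decide (v ∈ s)).toFinset := by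
  ext x
  simp only [Finset.mem_inter, Finset.mem_union, List.mem_toFinset, List.mem_filter,
    decide_eq_true_eq]
  tauto

theorem aux_hval_inter_eq {F : Type} [DecidableEq F] (C : ℕ) (Sc : Fin C → Finset F)
    (nA : Fin C → Finset F → ℕ) (τ n : ℕ)
    (hdisjS : ∀ c c', c ≠ c' → Disjoint (Sc c) (Sc c'))
    (c : Fin C) (v : F) (hv : v ∈ Sc c) (L₁ L₂ : Finset F)
    (h : L₁ ∩ Sc c = L₂ ∩ Sc c) :
    hval C Sc nA τ n v L₁ = hval C Sc nA τ n v L₂ := by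
  unfold hval
  congr 1
  refine Finset.sum_congr rfl fun c' _ => Finset.sum_congr rfl fun A hA => ?_
  rw [Finset.mem_powerset] at hA
  by_cases hc : c' = c
  · subst hc
    have hAL : A ∩ L₁ = A ∩ L₂ := by
      ext x
      simp only [Finset.mem_inter]
      have hx : x ∈ L₁ ∩ Sc c' ↔ x ∈ L₂ ∩ Sc c' := by rw [h]
      simp only [Finset.mem_inter] at hx
      constructor
      · rintro ⟨hxA, hxL⟩; exact ⟨hxA, (hx.mp ⟨hxL, hA hxA⟩).1⟩
      · rintro ⟨hxA, hxL⟩; exact ⟨hxA, (hx.mpr ⟨hxL, hA hxA⟩).1⟩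
    rw [hAL]
  · have hvA : v ∉ A := fun hvA => (Finset.disjoint_left.mp (hdisjS c' c hc)) (hA hvA) hv
    simp [hvA]

theorem aux_card_partition {F X : Type} [DecidableEq F] [DecidableEq X] {C : ℕ}
    (Sc : Fin C → Finset F) (label : X → Fin C) (feats : X → Finset F)
    (hfeats : ∀ x, feats x ⊆ Sc (label x)) (s : Finset X) :
    s.card = ∑ c : Fin C, ∑ A ∈ (Sc c).powerset,
      (s.filter fun x => label x = c ∧ feats x = A).card := by
  rw [Finset.card_eq_sum_card_fiberwise (f := label) (t := Finset.univ)
    (fun x _ => Finset.mem_univ _)]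
  refine Finset.sum_congr rfl fun c _ => ?_
  rw [Finset.card_eq_sum_card_fiberwise (f := feats) (t := (Sc c).powerset) ?_]
  · refine Finset.sum_congr rfl fun A _ => ?_
    rw [Finset.filter_filter]
  · intro x hx
    rw [Finset.mem_coe, Finset.mem_filter] at hx
    rw [Finset.mem_coe, Finset.mem_powerset, ← hx.2]
    exact hfeats x

theorem aux_cumT_card {X : Type} [DecidableEq X] (chunk : ℕ → Finset X) (n : ℕ)
    (hchunkdisj : ∀ j j', j ≠ j' → Disjoint (chunk j) (chunk j'))
    (hchunkcard : ∀ j, 1 ≤ j → (chunk j).card = n) (j : ℕ) :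
    (cumT chunk j).card = j * n := by
  unfold cumT
  rw [Finset.card_biUnion (fun l _ l' _ hne => hchunkdisj l l' hne)]
  rw [Finset.sum_congr rfl fun l hl => hchunkcard l (Finset.mem_Icc.mp hl).1]
  simp [Nat.card_Icc, mul_comm]

theorem aux_gval_eq_hval {F X : Type} [DecidableEq F] [DecidableEq X] {C : ℕ}
    (Sc : Fin C → Finset F) (label : X → Fin C) (feats : X → Finset F)
    (nA : Fin C → Finset F → ℕ) (chunk : ℕ → Finset X) (τ n : ℕ)
    (hfeats : ∀ x, feats x ⊆ Sc (label x))
    (hchunkdisj : ∀ j j', j ≠ j' → Disjoint (chunk j) (chunk j'))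
    (hchunkcard : ∀ j, 1 ≤ j → (chunk j).card = n)
    (hcount : ∀ j, 1 ≤ j → ∀ c : Fin C, ∀ A ∈ (Sc c).powerset,
      ((chunk j).filter fun x => label x = c ∧ feats x = A).card = nA c A)
    (hnpos : 0 < n)
    (j : ℕ) (hj : 1 ≤ j) (L : Finset F) (v : F) :
    gval feats (cumT chunk j) (active feats τ L ∅ (cumT chunk j)) v
      = hval C Sc nA τ n v L := by
  have chunkcount : ∀ c : Fin C, ∀ A ∈ (Sc c).powerset,
      ((cumT chunk j).filter fun x => label x = c ∧ feats x = A).card = j * nA c A := by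
    intro c A hA
    unfold cumT
    rw [Finset.filter_biUnion,
      Finset.card_biUnion (fun l _ l' _ hne =>
        Finset.disjoint_filter_filter (hchunkdisj l l' hne))]
    rw [Finset.sum_congr rfl fun l hl => hcount l (Finset.mem_Icc.mp hl).1 c A hA]
    simp [Nat.card_Icc]
  have hfc : featCount feats (active feats τ L ∅ (cumT chunk j)) v
      = ((cumT chunk j).filter fun x =>
          (feats x ∩ L).card < τ ∧ v ∈ feats x).card := by
    unfold featCount active
    rw [Finset.sdiff_empty, Finset.filter_filter]
  have key : featCount feats (active feats τ L ∅ (cumT chunk j)) v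
      = ∑ c : Fin C, ∑ A ∈ (Sc c).powerset,
          (if v ∈ A ∧ (A ∩ L).card < τ then j * nA c A else 0) := by
    rw [hfc, aux_card_partition Sc label feats hfeats]
    refine Finset.sum_congr rfl fun c _ => Finset.sum_congr rfl fun A hA => ?_
    rw [Finset.filter_filter]
    by_cases hQ : v ∈ A ∧ (A ∩ L).card < τ
    · rw [if_pos hQ, ← chunkcount c A hA]
      congr 1
      apply Finset.filter_congr
      rintro x -
      constructor
      · rintro ⟨-, h2⟩; exact h2
      · rintro ⟨h1, h2⟩
        exact ⟨by rw [h2]; exact ⟨hQ.2, hQ.1⟩, h1, h2⟩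
    · rw [if_neg hQ, Finset.card_eq_zero]
      rw [Finset.filter_eq_empty_iff]
      rintro x -
      rintro ⟨⟨ha, hb⟩, -, hfx⟩
      exact hQ ⟨by rwa [← hfx], by rwa [← hfx]⟩
  unfold gval hval
  rw [key, aux_cumT_card chunk n hchunkdisj hchunkcard j]
  push_cast
  have hsum : (∑ c : Fin C, ∑ A ∈ (Sc c).powerset,
      (if v ∈ A ∧ (A ∩ L).card < τ then (j : ℝ) * (nA c A : ℝ) else 0))
      = (j : ℝ) * ∑ c : Fin C, ∑ A ∈ (Sc c).powerset,
          (nA c A : ℝ) * (if v ∈ A ∧ (A ∩ L).card < τ then 1 else 0) := by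
    rw [Finset.mul_sum]
    refine Finset.sum_congr rfl fun c _ => ?_
    rw [Finset.mul_sum]
    refine Finset.sum_congr rfl fun A _ => ?_
    by_cases hQ : v ∈ A ∧ (A ∩ L).card < τ <;> simp [hQ] <;> ring
  rw [hsum]
  have hj' : 0 < j := hj
  have hj0 : (j : ℝ) ≠ 0 := by positivity
  have hn0 : (n : ℝ) ≠ 0 := by positivity
  field_simp

theorem aux_learnedAfter_subset {F : Type} [DecidableEq F] (S L0 : Finset F)
    (us : List F) (hL0 : L0 ⊆ S) (hus : ∀ v ∈ us, v ∈ S) (i : ℕ) :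
    learnedAfter L0 us i ⊆ S := by
  unfold learnedAfter
  intro x hx
  rcases Finset.mem_union.mp hx with h | h
  · exact hL0 h
  · exact hus x (List.mem_of_mem_take (List.mem_toFinset.mp h))

end AuxForProof

/-- Lemma: with a smaller dataset one learns a per-class
prefix. If one model is trained on `T_{1:j₁}` and another on `T_{1:j₂}` with
`j₁ > j₂`, both starting from the same learned set `L0` with no memorized data,
then for every class `c` and index `i`, the `i`-th feature of class `c` learned
by the second model is either equal to that learned by the first model or is
`NA` (i.e. `none`). -/
theorem smaller_dataset_learns_prefix
    {F X : Type} [DecidableEq F] [DecidableEq X]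
    (C K τ : ℕ) (γ : ℝ) (n : ℕ)
    (Sc : Fin C → Finset F) (label : X → Fin C) (feats : X → Finset F)
    (nA : Fin C → Finset F → ℕ) (chunk : ℕ → Finset X)
    (hγ : 0 < γ) (hτK : τ < K)
    (hK : ∀ c, (Sc c).card = K)
    (hdisjS : ∀ c c', c ≠ c' → Disjoint (Sc c) (Sc c'))
    (hfeats : ∀ x, feats x ⊆ Sc (label x))
    (hnA : ∀ c, ∀ A ∈ (Sc c).powerset, 1 ≤ nA c A)
    (hn : n = ∑ c : Fin C, ∑ A ∈ (Sc c).powerset, nA c A)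
    (hchunkdisj : ∀ j j', j ≠ j' → Disjoint (chunk j) (chunk j'))
    (hchunkcard : ∀ j, 1 ≤ j → (chunk j).card = n)
    (hcount : ∀ j, 1 ≤ j → ∀ c : Fin C, ∀ A ∈ (Sc c).powerset,
      ((chunk j).filter fun x => label x = c ∧ feats x = A).card = nA c A)
    (hinj : ∀ L : Finset F, L ⊆ Finset.univ.biUnion Sc →
      ∀ c : Fin C, ∀ v₁ ∈ Sc c, ∀ v₂ ∈ Sc c,
        hval C Sc nA τ n v₁ L = hval C Sc nA τ n v₂ L → v₁ = v₂)
    (j₁ j₂ : ℕ) (hj₂ : 1 ≤ j₂) (hj : j₂ < j₁)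
    (L0 : Finset F) (hL0 : L0 ⊆ Finset.univ.biUnion Sc)
    (us us' : List F)
    (hrun : IsRun (Finset.univ.biUnion Sc) feats τ γ (cumT chunk j₁) ∅ L0 us)
    (hrun' : IsRun (Finset.univ.biUnion Sc) feats τ γ (cumT chunk j₂) ∅ L0 us') :
    ∀ (c : Fin C) (i : ℕ),
      (us.filter fun v => decide (v ∈ Sc c))[i]? =
        (us'.filter fun v => decide (v ∈ Sc c))[i]? ∨
      (us'.filter fun v => decide (v ∈ Sc c))[i]? = none := by
  intro c i
  classical
  set S := Finset.univ.biUnion Sc with hS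
  have hj₁ : 1 ≤ j₁ := le_trans hj₂ hj.le
  have hnpos : 0 < n := by
    rw [hn]
    calc 0 < ∑ A ∈ (Sc c).powerset, nA c A :=
        lt_of_lt_of_le (hnA c ∅ (by simp))
          (Finset.single_le_sum (fun _ _ => Nat.zero_le _) (by simp))
      _ ≤ _ := Finset.single_le_sum
          (f := fun c : Fin C => ∑ A ∈ (Sc c).powerset, nA c A)
          (fun _ _ => Nat.zero_le _) (Finset.mem_univ c)
  have husS : ∀ v ∈ us, v ∈ S := by
    intro v hv
    obtain ⟨⟨k, hk⟩, rfl⟩ := List.mem_iff_get.mp hv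
    exact (Finset.mem_sdiff.mp (hrun.mem k hk)).1
  have husS' : ∀ v ∈ us', v ∈ S := by
    intro v hv
    obtain ⟨⟨k, hk⟩, rfl⟩ := List.mem_iff_get.mp hv
    exact (Finset.mem_sdiff.mp (hrun'.mem k hk)).1
  set p : F → Bool := fun v => decide (v ∈ Sc c) with hp
  set f := us.filter p with hf
  set f' := us'.filter p with hf'
  have hgh₁ : ∀ L v, gval feats (cumT chunk j₁)
      (active feats τ L ∅ (cumT chunk j₁)) v = hval C Sc nA τ n v L :=
    fun L v => aux_gval_eq_hval Sc label feats nA chunk τ n hfeats hchunkdisj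
      hchunkcard hcount hnpos j₁ hj₁ L v
  have hgh₂ : ∀ L v, gval feats (cumT chunk j₂)
      (active feats τ L ∅ (cumT chunk j₂)) v = hval C Sc nA τ n v L :=
    fun L v => aux_gval_eq_hval Sc label feats nA chunk τ n hfeats hchunkdisj
      hchunkcard hcount hnpos j₂ hj₂ L v
  have hT₁card : (cumT chunk j₁).card = j₁ * n :=
    aux_cumT_card chunk n hchunkdisj hchunkcard j₁
  have hT₂card : (cumT chunk j₂).card = j₂ * n :=
    aux_cumT_card chunk n hchunkdisj hchunkcard j₂
  have hLint : ∀ (us0 : List F) (k : ℕ),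
      learnedAfter L0 us0 k ∩ Sc c = (L0 ∩ Sc c) ∪ ((us0.take k).filter p).toFinset :=
    fun us0 k => aux_toFinset_inter L0 (us0.take k) (Sc c)
  have key : ∀ m : ℕ, f'.take m <+: f := by
    intro m
    induction m with
    | zero => simp
    | succ m ihm =>
      rcases le_or_gt f'.length m with hlen | hm
      · rw [List.take_of_length_le (le_trans hlen (Nat.le_succ m)),
          ← List.take_of_length_le hlen]
        exact ihm
      · obtain ⟨i', hi', hg', ht'⟩ := aux_filter_index p us' m hm
        have hv'Sc : f'.get ⟨m, hm⟩ ∈ Sc c := by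
          have h1 : f'.get ⟨m, hm⟩ ∈ f' := f'.get_mem _
          have h2 := List.of_mem_filter h1
          simpa [hp] using h2
        have hv'S : f'.get ⟨m, hm⟩ ∈ S :=
          Finset.mem_biUnion.mpr ⟨c, Finset.mem_univ c, hv'Sc⟩
        have hv'nL' : f'.get ⟨m, hm⟩ ∉ learnedAfter L0 us' i' := by
          have h1 := hrun'.mem i' hi'
          rw [hg'] at h1
          exact (Finset.mem_sdiff.mp h1).2
        have hL'cap : learnedAfter L0 us' i' ∩ Sc c
            = (L0 ∩ Sc c) ∪ (f'.take m).toFinset := by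
          rw [hLint us' i', ht']
        have htakelen : (f'.take m).length = m := by simp [hm.le]
        rcases le_or_gt f.length m with hmf | hmf
        · exfalso
          have hmle : m ≤ f.length := by
            have h1 := ihm.length_le
            rwa [htakelen] at h1
          have hmeq : m = f.length := le_antisymm hmle hmf
          have heq : f'.take m = f := ihm.eq_of_length (by rw [htakelen, hmeq])
          have hEndcap : learnedAfter L0 us us.length ∩ Sc c
              = learnedAfter L0 us' i' ∩ Sc c := by
            rw [hLint us us.length, hL'cap, List.take_length, ← hf, heq]
          have hv'nEnd : f'.get ⟨m, hm⟩ ∉ learnedAfter L0 us us.length := by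
            intro hmem
            apply hv'nL'
            have h1 : f'.get ⟨m, hm⟩ ∈ learnedAfter L0 us us.length ∩ Sc c :=
              Finset.mem_inter.mpr ⟨hmem, hv'Sc⟩
            rw [hEndcap] at h1
            exact (Finset.mem_inter.mp h1).1
          have hstop := hrun.stopped _ (Finset.mem_sdiff.mpr ⟨hv'S, hv'nEnd⟩)
          have hthr := hrun'.threshold i' hi'
          rw [hg'] at hthr
          rw [hgh₁] at hstop
          rw [hgh₂] at hthr
          rw [hT₁card] at hstop
          rw [hT₂card] at hthr
          have hEq : hval C Sc nA τ n (f'.get ⟨m, hm⟩) (learnedAfter L0 us us.length)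
              = hval C Sc nA τ n (f'.get ⟨m, hm⟩) (learnedAfter L0 us' i') :=
            aux_hval_inter_eq C Sc nA τ n hdisjS c _ hv'Sc _ _ hEndcap
          have hlt : γ / ((j₁ * n : ℕ) : ℝ) < γ / ((j₂ * n : ℕ) : ℝ) := by
            apply div_lt_div_of_pos_left hγ
            · exact_mod_cast Nat.mul_pos hj₂ hnpos
            · exact_mod_cast Nat.mul_lt_mul_of_lt_of_le hj le_rfl hnpos
          linarith
        · obtain ⟨i, hi, hg, ht⟩ := aux_filter_index p us m hmf
          have hvSc : f.get ⟨m, hmf⟩ ∈ Sc c := by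
            have h1 : f.get ⟨m, hmf⟩ ∈ f := f.get_mem _
            have h2 := List.of_mem_filter h1
            simpa [hp] using h2
          have hvS : f.get ⟨m, hmf⟩ ∈ S :=
            Finset.mem_biUnion.mpr ⟨c, Finset.mem_univ c, hvSc⟩
          have hvnL : f.get ⟨m, hmf⟩ ∉ learnedAfter L0 us i := by
            have h1 := hrun.mem i hi
            rw [hg] at h1
            exact (Finset.mem_sdiff.mp h1).2
          have htake_eq : f'.take m = f.take m := by
            have h1 := List.prefix_iff_eq_take.mp ihm
            rwa [htakelen] at h1
          have hLcap : learnedAfter L0 us i ∩ Sc c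
              = learnedAfter L0 us' i' ∩ Sc c := by
            rw [hLint us i, hLint us' i', ht, ht', htake_eq]
          have hvnL' : f.get ⟨m, hmf⟩ ∉ learnedAfter L0 us' i' := by
            intro hmem
            apply hvnL
            have h1 : f.get ⟨m, hmf⟩ ∈ learnedAfter L0 us' i' ∩ Sc c :=
              Finset.mem_inter.mpr ⟨hmem, hvSc⟩
            rw [← hLcap] at h1
            exact (Finset.mem_inter.mp h1).1
          have hv'nL : f'.get ⟨m, hm⟩ ∉ learnedAfter L0 us i := by
            intro hmem
            apply hv'nL'
            have h1 : f'.get ⟨m, hm⟩ ∈ learnedAfter L0 us i ∩ Sc c :=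
              Finset.mem_inter.mpr ⟨hmem, hv'Sc⟩
            rw [hLcap] at h1
            exact (Finset.mem_inter.mp h1).1
          have h1 := hrun.maximal i hi _ (Finset.mem_sdiff.mpr ⟨hv'S, hv'nL⟩)
          rw [hg] at h1
          have h2 := hrun'.maximal i' hi' _ (Finset.mem_sdiff.mpr ⟨hvS, hvnL'⟩)
          rw [hg'] at h2
          rw [hgh₁, hgh₁] at h1
          rw [hgh₂, hgh₂] at h2
          have e1 : hval C Sc nA τ n (f.get ⟨m, hmf⟩) (learnedAfter L0 us' i')
              = hval C Sc nA τ n (f.get ⟨m, hmf⟩) (learnedAfter L0 us i) :=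
            aux_hval_inter_eq C Sc nA τ n hdisjS c _ hvSc _ _ hLcap.symm
          have e2 : hval C Sc nA τ n (f'.get ⟨m, hm⟩) (learnedAfter L0 us' i')
              = hval C Sc nA τ n (f'.get ⟨m, hm⟩) (learnedAfter L0 us i) :=
            aux_hval_inter_eq C Sc nA τ n hdisjS c _ hv'Sc _ _ hLcap.symm
          have heqv : hval C Sc nA τ n (f.get ⟨m, hmf⟩) (learnedAfter L0 us i)
              = hval C Sc nA τ n (f'.get ⟨m, hm⟩) (learnedAfter L0 us i) :=
            le_antisymm (by linarith) h1
          have hveq : f.get ⟨m, hmf⟩ = f'.get ⟨m, hm⟩ :=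
            hinj (learnedAfter L0 us i)
              (aux_learnedAfter_subset S L0 us hL0 husS i) c _ hvSc _ hv'Sc heqv
          have hstep : f'.take (m+1) = f.take (m+1) := by
            rw [List.take_succ, List.take_succ, htake_eq]
            congr 1
            rw [List.getElem?_eq_getElem hm, List.getElem?_eq_getElem hmf]
            simp only [List.get_eq_getElem] at hveq
            rw [hveq]
          rw [hstep]
          exact List.take_prefix _ _
  have hpref : f' <+: f := by
    have h1 := key f'.length
    rwa [List.take_length] at h1
  rcases lt_or_ge i f'.length with hilen | hilen
  · left
    obtain ⟨t, htt⟩ := hpref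
    rw [← htt, List.getElem?_append, if_pos hilen]
  · right
    exact List.getElem?_eq_none hilen
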